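/- For all real x with 0 < |x| < π/2, one has 3x/sin x + cos x < 4 + ((12π − 32)/π³)·x³·sin x. -/

import Mathlib

open Real
set_option maxHeartbeats 1000000

private lemma mono_aux {F F' : ℝ → ℝ} (hd : ∀ y, HasDerivAt F (F' y) y)
    (h0 : ∀ y, 0 ≤ y → 0 ≤ F' y) (hF0 : F 0 = 0) {x : ℝ} (hx : 0 ≤ x) : 0 ≤ F x := by
  have hm : MonotoneOn F (Set.Ici (0:ℝ)) := by
    apply monotoneOn_of_deriv_nonneg (convex_Ici 0)
      (fun y _ => (hd y).continuousAt.continuousWithinAt)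
      (fun y _ => (hd y).differentiableAt.differentiableWithinAt)
    intro y hy
    rw [interior_Ici] at hy
    rw [(hd y).deriv]
    exact h0 y (le_of_lt hy)
  have h := hm (Set.mem_Ici.mpr le_rfl) (Set.mem_Ici.mpr hx) hx
  rw [hF0] at h
  exact h

private lemma sin_ge1 {x : ℝ} (hx : 0 ≤ x) : x - x^3/6 ≤ Real.sin x := by
  have h := mono_aux (F := fun y => Real.sin y - (y - y^3/6))
      (F' := fun y => Real.cos y - (1 - y^2/2)) (fun y => by
        have := (Real.hasDerivAt_sin y).sub
          ((hasDerivAt_id y).sub ((hasDerivAt_pow 3 y).div_const 6))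
        convert this using 1
        all_goals first
          | (funext z; simp only [Pi.sub_apply, Pi.add_apply, Pi.neg_apply, id] <;> (try push_cast) <;> ring)
          | (push_cast; ring)
          | rfl)
      (fun y _ => by nlinarith [Real.one_sub_sq_div_two_le_cos (x := y)])
      (by simp) hx
  simpa using h

private lemma cos_le2 {x : ℝ} (hx : 0 ≤ x) : Real.cos x ≤ 1 - x^2/2 + x^4/24 := by
  have h := mono_aux (F := fun y => (1 - y^2/2 + y^4/24) - Real.cos y)
      (F' := fun y => Real.sin y - (y - y^3/6)) (fun y => by
        have := (((hasDerivAt_pow 2 y).div_const 2).neg.add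
          ((hasDerivAt_pow 4 y).div_const 24)).const_add 1 |>.sub (Real.hasDerivAt_cos y)
        convert this using 1
        all_goals first
          | (funext z; simp only [Pi.sub_apply, Pi.add_apply, Pi.neg_apply, id] <;> (try push_cast) <;> ring)
          | (push_cast; ring)
          | rfl)
      (fun y hy => by linarith [sin_ge1 hy])
      (by simp) hx
  simpa using h

private lemma sin_le2 {x : ℝ} (hx : 0 ≤ x) : Real.sin x ≤ x - x^3/6 + x^5/120 := by
  have h := mono_aux (F := fun y => (y - y^3/6 + y^5/120) - Real.sin y)
      (F' := fun y => (1 - y^2/2 + y^4/24) - Real.cos y) (fun y => by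
        have := ((hasDerivAt_id y).sub ((hasDerivAt_pow 3 y).div_const 6)).add
          ((hasDerivAt_pow 5 y).div_const 120) |>.sub (Real.hasDerivAt_sin y)
        convert this using 1
        all_goals first
          | (funext z; simp only [Pi.sub_apply, Pi.add_apply, Pi.neg_apply, id] <;> (try push_cast) <;> ring)
          | (push_cast; ring)
          | rfl)
      (fun y hy => by linarith [cos_le2 hy])
      (by simp) hx
  simpa using h

private lemma cos_ge3 {x : ℝ} (hx : 0 ≤ x) : 1 - x^2/2 + x^4/24 - x^6/720 ≤ Real.cos x := by
  have h := mono_aux (F := fun y => Real.cos y - (1 - y^2/2 + y^4/24 - y^6/720))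
      (F' := fun y => (y - y^3/6 + y^5/120) - Real.sin y) (fun y => by
        have := (Real.hasDerivAt_cos y).sub
          ((((hasDerivAt_pow 2 y).div_const 2).neg.add
            ((hasDerivAt_pow 4 y).div_const 24)).const_add 1 |>.sub
            ((hasDerivAt_pow 6 y).div_const 720))
        convert this using 1
        all_goals first
          | (funext z; simp only [Pi.sub_apply, Pi.add_apply, Pi.neg_apply, id] <;> (try push_cast) <;> ring)
          | (push_cast; ring)
          | rfl)
      (fun y hy => by linarith [sin_le2 hy])
      (by simp) hx
  simpa using h

private lemma sin_ge3 {x : ℝ} (hx : 0 ≤ x) :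
    x - x^3/6 + x^5/120 - x^7/5040 ≤ Real.sin x := by
  have h := mono_aux (F := fun y => Real.sin y - (y - y^3/6 + y^5/120 - y^7/5040))
      (F' := fun y => Real.cos y - (1 - y^2/2 + y^4/24 - y^6/720)) (fun y => by
        have := (Real.hasDerivAt_sin y).sub
          (((hasDerivAt_id y).sub ((hasDerivAt_pow 3 y).div_const 6)).add
            ((hasDerivAt_pow 5 y).div_const 120) |>.sub
            ((hasDerivAt_pow 7 y).div_const 5040))
        convert this using 1
        all_goals first
          | (funext z; simp only [Pi.sub_apply, Pi.add_apply, Pi.neg_apply, id] <;> (try push_cast) <;> ring)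
          | (push_cast; ring)
          | rfl)
      (fun y hy => by linarith [cos_ge3 hy])
      (by simp) hx
  simpa using h

private lemma q_pos {t : ℝ} (h0 : 0 ≤ t) (h1 : t ≤ 9/4) :
    1/10 - 13/1260*t + 1/2880*t^2 <
      1837/10000 * (1 - t/3 + 2/45*t^2 - 1/315*t^3 + 41/302400*t^4
        - 1/302400*t^5 + 1/25401600*t^6) := by
  nlinarith [mul_nonneg h0 h0, mul_nonneg (mul_nonneg h0 h0) h0,
    mul_nonneg (mul_nonneg (mul_nonneg h0 h0) h0) h0,
    mul_nonneg (sub_nonneg.2 h1) h0,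
    mul_nonneg (mul_nonneg (sub_nonneg.2 h1) h0) h0,
    mul_nonneg (mul_nonneg (mul_nonneg (sub_nonneg.2 h1) h0) h0) h0,
    mul_nonneg (mul_nonneg (mul_nonneg (mul_nonneg (sub_nonneg.2 h1) h0) h0) h0) h0,
    mul_nonneg (mul_nonneg (sub_nonneg.2 h1) (sub_nonneg.2 h1)) h0,
    sq_nonneg (t-9/4), sq_nonneg t]

private lemma c_lb : (1837/10000 : ℝ) ≤ (12*π - 32)/π^3 := by
  rw [le_div_iff₀ (by positivity)]
  nlinarith [Real.pi_gt_d6, Real.pi_lt_d6, Real.pi_pos,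
    sq_nonneg (π - 3.141593), sq_nonneg π, mul_pos Real.pi_pos Real.pi_pos]

private lemma c_ub : (12*π - 32)/π^3 ≤ 18381/100000 := by
  rw [div_le_iff₀ (by positivity)]
  nlinarith [Real.pi_gt_d6, Real.pi_lt_d6, Real.pi_pos,
    sq_nonneg (π - 3.141592), sq_nonneg π, mul_pos Real.pi_pos Real.pi_pos]

private lemma case1 {x : ℝ} (hx : 0 < x) (hx2 : x ≤ 3/2) :
    3*x + Real.sin x * Real.cos x - 4 * Real.sin x
      < ((12*π - 32)/π^3) * x^3 * (Real.sin x)^2 := by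
  have hx0 : (0:ℝ) ≤ x := hx.le
  have hs3 := sin_ge3 hx0
  have hs2 := sin_le2 hx0
  have hc2 := cos_le2 hx0
  have hcos0 : 0 ≤ Real.cos x := Real.cos_nonneg_of_mem_Icc
    ⟨by linarith [Real.pi_gt_d6], by linarith [Real.pi_gt_d6]⟩
  have hxsq : x^2 ≤ 9/4 := by nlinarith
  have t1 : 0 ≤ x*(1 - x^2/6) := mul_nonneg hx0 (by nlinarith)
  have t2 : 0 ≤ x^5*(42 - x^2) := mul_nonneg (pow_nonneg hx0 5) (by nlinarith)
  have hL0 : 0 ≤ x - x^3/6 + x^5/120 - x^7/5040 := by nlinarith [t1, t2]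
  have hU0 : (0:ℝ) ≤ x - x^3/6 + x^5/120 := by nlinarith [t1, pow_nonneg hx0 5]
  have hsc : Real.sin x * Real.cos x ≤
      (x - x^3/6 + x^5/120) * (1 - x^2/2 + x^4/24) := by
    calc Real.sin x * Real.cos x ≤ (x - x^3/6 + x^5/120) * Real.cos x :=
          mul_le_mul_of_nonneg_right hs2 hcos0
      _ ≤ (x - x^3/6 + x^5/120) * (1 - x^2/2 + x^4/24) :=
          mul_le_mul_of_nonneg_left hc2 hU0
  have hq := q_pos (t := x^2) (by positivity) hxsq
  have hpoly : 3*x + (x - x^3/6 + x^5/120) * (1 - x^2/2 + x^4/24)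
      - 4*(x - x^3/6 + x^5/120 - x^7/5040)
      < 1837/10000 * x^3 * (x - x^3/6 + x^5/120 - x^7/5040)^2 := by
    nlinarith [mul_lt_mul_of_pos_left hq (show (0:ℝ) < x^5 by positivity)]
  have hLsq : (x - x^3/6 + x^5/120 - x^7/5040)^2 ≤ (Real.sin x)^2 := by
    nlinarith [hs3, hL0]
  have h1 : 1837/10000 * x^3 * (x - x^3/6 + x^5/120 - x^7/5040)^2
      ≤ 1837/10000 * x^3 * (Real.sin x)^2 :=
    mul_le_mul_of_nonneg_left hLsq (by positivity)
  have h2 : 1837/10000 * x^3 * (Real.sin x)^2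
      ≤ ((12*π - 32)/π^3) * x^3 * (Real.sin x)^2 :=
    mul_le_mul_of_nonneg_right
      (mul_le_mul_of_nonneg_right c_lb (by positivity)) (sq_nonneg _)
  linarith [hsc, hs3, hpoly, h1, h2]

private lemma case2 {x : ℝ} (hx : 3/2 ≤ x) (hx2 : x < π/2) :
    3*x + Real.sin x * Real.cos x - 4 * Real.sin x
      < ((12*π - 32)/π^3) * x^3 * (Real.sin x)^2 := by
  set C : ℝ := (12*π - 32)/π^3 with hC
  have hCpos : 0 < C := by
    rw [hC]
    apply div_pos (by linarith [Real.pi_gt_d6]) (by positivity)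
  set g : ℝ → ℝ := fun y => 3*y + Real.sin y * Real.cos y - 4*Real.sin y
      - C*y^3*(Real.sin y)^2 with hgdef
  have hderiv : ∀ y : ℝ, HasDerivAt g
      (3 + (Real.cos y * Real.cos y - Real.sin y * Real.sin y) - 4*Real.cos y
        - C*(3*y^2*(Real.sin y)^2 + y^3*(2*Real.sin y*Real.cos y))) y := by
    intro y
    have h1 : HasDerivAt (fun y : ℝ => 3*y) 3 y := by
      simpa using (hasDerivAt_id y).const_mul 3
    have h2 := (Real.hasDerivAt_sin y).mul (Real.hasDerivAt_cos y)
    have h3 := (Real.hasDerivAt_sin y).const_mul 4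
    have h4 := ((hasDerivAt_pow 3 y).mul ((Real.hasDerivAt_sin y).pow 2)).const_mul C
    have := ((h1.add h2).sub h3).sub h4
    convert this using 1
    · rfl
    · rfl
    · funext z; simp [hgdef]; ring
    · push_cast; simp only [Pi.pow_apply]; ring
  have hmono : StrictMonoOn g (Set.Icc (3/2) (π/2)) := by
    apply strictMonoOn_of_deriv_pos (convex_Icc _ _)
      (fun y _ => (hderiv y).continuousAt.continuousWithinAt)
    intro y hy
    rw [interior_Icc] at hy
    rw [(hderiv y).deriv]
    obtain ⟨hy1, hy2⟩ := hy
    have hpilt : π < 3.141593 := Real.pi_lt_d6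
    have hy0 : (0:ℝ) < y := by linarith
    have hyub : y < 1.58 := by linarith
    have hcos0 : 0 ≤ Real.cos y := Real.cos_nonneg_of_mem_Icc
      ⟨by linarith [Real.pi_gt_d6], hy2.le⟩
    have hsin0 : 0 ≤ Real.sin y := Real.sin_nonneg_of_nonneg_of_le_pi hy0.le
      (by linarith [Real.pi_gt_d6])
    have hsin1 : Real.sin y ≤ 1 := Real.sin_le_one y
    have hcosub : Real.cos y ≤ 11/128 := by
      have := cos_le2 hy0.le
      nlinarith [mul_nonneg (sub_nonneg.2 (show (9:ℝ)/4 ≤ y^2 by nlinarith))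
        (sub_nonneg.2 (show y^2 ≤ (39:ℝ)/4 by nlinarith))]
    have hCub : C ≤ 18381/100000 := c_ub
    have hy2b : y^2 ≤ 2.4964 := by nlinarith
    have hy3b : y^3 ≤ 3.944312 := by nlinarith
    have hpyth := Real.sin_sq_add_cos_sq y
    have s2 : (Real.sin y)^2 ≤ 1 := by nlinarith
    have s2y : 3*y^2*(Real.sin y)^2 ≤ 3*2.4964 := by
      nlinarith [mul_nonneg (sq_nonneg y) (sub_nonneg.2 s2)]
    have b1 : C*(3*y^2*(Real.sin y)^2) ≤ 18381/100000*(3*2.4964) :=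
      mul_le_mul hCub s2y (by positivity) (by norm_num)
    have sc : 2*Real.sin y*Real.cos y ≤ 2*(11/128) := by nlinarith
    have sc0 : 0 ≤ 2*Real.sin y*Real.cos y := by
      have := mul_nonneg hsin0 hcos0; linarith [mul_nonneg hsin0 hcos0]
    have y30 : (0:ℝ) ≤ y^3 := by positivity
    have hprod : y^3*(2*Real.sin y*Real.cos y) ≤ 3.944312*(2*(11/128)) :=
      mul_le_mul hy3b sc sc0 (by norm_num)
    have b2 : C*(y^3*(2*Real.sin y*Real.cos y)) ≤ 18381/100000*(3.944312*(2*(11/128))) :=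
      mul_le_mul hCub hprod (mul_nonneg y30 sc0) (by norm_num)
    linarith [b1, b2, hcosub, hpyth, sq_nonneg (Real.cos y)]
  have hgval : g (π/2) = 0 := by
    have hpi : C * (π/2)^3 = (12*π-32)/8 := by
      rw [hC, div_mul_eq_mul_div, div_eq_div_iff (by positivity) (by norm_num)]
      ring
    simp only [hgdef, Real.sin_pi_div_two, Real.cos_pi_div_two]
    linarith [hpi]
  have hmem1 : x ∈ Set.Icc (3/2 : ℝ) (π/2) := ⟨hx, hx2.le⟩
  have hmem2 : (π/2 : ℝ) ∈ Set.Icc (3/2 : ℝ) (π/2) := ⟨by linarith, le_rfl⟩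
  have := hmono hmem1 hmem2 hx2
  rw [hgval] at this
  have : g x < 0 := this
  simp only [hgdef] at this
  linarith

private lemma key_pos {x : ℝ} (hx : 0 < x) (hx2 : x < π/2) :
    3 * x / Real.sin x + Real.cos x < 4 + ((12 * π - 32) / π ^ 3) * x ^ 3 * Real.sin x := by
  have hs : 0 < Real.sin x := Real.sin_pos_of_pos_of_lt_pi hx
    (by linarith [Real.pi_pos])
  have hg : 3*x + Real.sin x * Real.cos x - 4 * Real.sin x
      < ((12*π - 32)/π^3) * x^3 * (Real.sin x)^2 := by
    rcases le_or_gt x (3/2) with h | h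
    · exact case1 hx h
    · exact case2 h.le hx2
  rw [div_add' _ _ _ hs.ne', div_lt_iff₀ hs]
  nlinarith [hg]

theorem cusa_huygens_upper (x : ℝ) (h1 : 0 < |x|) (h2 : |x| < π / 2) :
    3 * x / Real.sin x + Real.cos x < 4 + ((12 * π - 32) / π ^ 3) * x ^ 3 * Real.sin x := by
  rcases lt_trichotomy x 0 with hneg | hzero | hpos
  · have hx2 : -x < π/2 := by rwa [abs_of_neg hneg] at h2
    have := key_pos (x := -x) (by linarith) hx2
    have e1 : 3 * (-x) / Real.sin (-x) = 3 * x / Real.sin x := by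
      rw [Real.sin_neg, mul_neg, neg_div_neg_eq]
    have e3 : (12 * π - 32) / π ^ 3 * (-x) ^ 3 * Real.sin (-x)
        = (12 * π - 32) / π ^ 3 * x ^ 3 * Real.sin x := by
      rw [Real.sin_neg]; ring
    rw [e1, Real.cos_neg, e3] at this
    exact this
  · simp [hzero] at h1
  · have hx2 : x < π/2 := by rwa [abs_of_pos hpos] at h2
    exact key_pos hpos hx2
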